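/- Fix Φ₁, Φ₂, Φ₃ ∈ [0, π). For r₁, r₂, r₃ > 0 define ℓ₁ = arcosh(cosh r₂ cosh r₃ + sinh r₂ sinh r₃ cos Φ₁), ℓ₂ = arcosh(cosh r₃ cosh r₁ + sinh r₃ sinh r₁ cos Φ₂), ℓ₃ = arcosh(cosh r₁ cosh r₂ + sinh r₁ sinh r₂ cos Φ₃), and define θ₁ = arccos((cosh ℓ₂ cosh ℓ₃ − cosh ℓ₁)/(sinh ℓ₂ sinh ℓ₃)), with θ₂, θ₃ defined by cyclic permutation of the indices. Suppose at the point (r₁, r₂, r₃) the lengths ℓ₁, ℓ₂, ℓ₃ satisfy the strict triangle inequalities. Then the partial derivatives satisfy the symmetry sinh(r₂) · ∂θ₁/∂r₂ = sinh(r₁) · ∂θ₂/∂r₁ (and similarly for the other pairs of indices). -/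

import Mathlib

open Real

/-- The inverse hyperbolic cosine (on `[1, ∞)`). -/
noncomputable def arcosh (x : ℝ) : ℝ := Real.log (x + Real.sqrt (x ^ 2 - 1))

/-- The hyperbolic distance between the centers of the hyperbolic circles of radii
`r (i+1)` and `r (i+2)` meeting at exterior angle `Φ i` (indices mod 3). -/
noncomputable def ellH (Φ r : Fin 3 → ℝ) (i : Fin 3) : ℝ :=
  _root_.arcosh (Real.cosh (r (i + 1)) * Real.cosh (r (i + 2)) +
    Real.sinh (r (i + 1)) * Real.sinh (r (i + 2)) * Real.cos (Φ i))

/-- The inner angle at the `i`-th vertex of the hyperbolic triangle with side lengths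
`ellH Φ r`, via the hyperbolic law of cosines. -/
noncomputable def thetaH (Φ r : Fin 3 → ℝ) (i : Fin 3) : ℝ :=
  Real.arccos ((Real.cosh (ellH Φ r (i + 1)) * Real.cosh (ellH Φ r (i + 2)) -
      Real.cosh (ellH Φ r i)) /
    (Real.sinh (ellH Φ r (i + 1)) * Real.sinh (ellH Φ r (i + 2))))

section Aux

lemma core {b x p' q' : ℝ} {p q : ℝ → ℝ}
    (hp : HasDerivAt p p' x) (hq : HasDerivAt q q' x)
    (hb : 1 < b) (hq1 : 1 < q x)
    (hA : 0 < (b ^ 2 - 1) * ((q x) ^ 2 - 1) - (b * q x - p x) ^ 2) :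
    HasDerivAt
      (fun y => Real.arccos ((b * q y - p y) /
        (Real.sqrt (b ^ 2 - 1) * Real.sqrt ((q y) ^ 2 - 1))))
      ((p' * ((q x) ^ 2 - 1) - q' * (p x * q x - b)) /
        (Real.sqrt ((b ^ 2 - 1) * ((q x) ^ 2 - 1) - (b * q x - p x) ^ 2) *
          ((q x) ^ 2 - 1))) x := by
  have hu : (0:ℝ) < b ^ 2 - 1 := by nlinarith
  have hw : (0:ℝ) < (q x) ^ 2 - 1 := by nlinarith
  have hsu : 0 < Real.sqrt (b ^ 2 - 1) := Real.sqrt_pos.2 hu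
  have hsw : 0 < Real.sqrt ((q x) ^ 2 - 1) := Real.sqrt_pos.2 hw
  have hsu2 : Real.sqrt (b ^ 2 - 1) ^ 2 = b ^ 2 - 1 := Real.sq_sqrt hu.le
  have hsw2 : Real.sqrt ((q x) ^ 2 - 1) ^ 2 = (q x) ^ 2 - 1 := Real.sq_sqrt hw.le
  have hsA : 0 < Real.sqrt ((b ^ 2 - 1) * ((q x) ^ 2 - 1) - (b * q x - p x) ^ 2) :=
    Real.sqrt_pos.2 hA
  have hsA2 : Real.sqrt ((b ^ 2 - 1) * ((q x) ^ 2 - 1) - (b * q x - p x) ^ 2) ^ 2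
      = (b ^ 2 - 1) * ((q x) ^ 2 - 1) - (b * q x - p x) ^ 2 := Real.sq_sqrt hA.le
  -- derivative of the inner quotient
  have hn : HasDerivAt (fun y => b * q y - p y) (b * q' - p') x := (hq.const_mul b).sub hp
  have hw' : HasDerivAt (fun y => (q y) ^ 2 - 1) (2 * q x * q') x := by
    have := (hq.pow 2).sub_const 1
    refine this.congr_deriv ?_
    push_cast
    ring
  have hd : HasDerivAt (fun y => Real.sqrt (b ^ 2 - 1) * Real.sqrt ((q y) ^ 2 - 1))
      (Real.sqrt (b ^ 2 - 1) * ((2 * q x * q') / (2 * Real.sqrt ((q x) ^ 2 - 1)))) x :=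
    (hw'.sqrt hw.ne').const_mul _
  have hdne : Real.sqrt (b ^ 2 - 1) * Real.sqrt ((q x) ^ 2 - 1) ≠ 0 := by positivity
  have hF := hn.div hd hdne
  -- the quotient stays strictly inside (-1, 1)
  have hFx2 : ((b * q x - p x) / (Real.sqrt (b ^ 2 - 1) * Real.sqrt ((q x) ^ 2 - 1))) ^ 2 < 1 := by
    rw [div_pow, div_lt_one (by positivity)]
    nlinarith
  have hne1 : (b * q x - p x) / (Real.sqrt (b ^ 2 - 1) * Real.sqrt ((q x) ^ 2 - 1)) ≠ -1 := by
    intro h; rw [h] at hFx2; norm_num at hFx2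
  have hne2 : (b * q x - p x) / (Real.sqrt (b ^ 2 - 1) * Real.sqrt ((q x) ^ 2 - 1)) ≠ 1 := by
    intro h; rw [h] at hFx2; norm_num at hFx2
  have harc := (Real.hasDerivAt_arccos hne1 hne2).comp x hF
  refine harc.congr_deriv ?_
  symm
  have h1 : 1 - ((b * q x - p x) / (Real.sqrt (b ^ 2 - 1) * Real.sqrt ((q x) ^ 2 - 1))) ^ 2
      = ((b ^ 2 - 1) * ((q x) ^ 2 - 1) - (b * q x - p x) ^ 2) /
        ((b ^ 2 - 1) * ((q x) ^ 2 - 1)) := by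
    have hprod : Real.sqrt (b ^ 2 - 1) ^ 2 * Real.sqrt ((q x) ^ 2 - 1) ^ 2
        = (b ^ 2 - 1) * ((q x) ^ 2 - 1) := by rw [hsu2, hsw2]
    field_simp
    linear_combination (b * q x - p x) ^ 2 * hprod
  rw [h1, Real.sqrt_div hA.le, Real.sqrt_mul hu.le, one_div_div]
  set S := Real.sqrt ((b ^ 2 - 1) * ((q x) ^ 2 - 1) - (b * q x - p x) ^ 2)
  set U := Real.sqrt (b ^ 2 - 1)
  set W := Real.sqrt ((q x) ^ 2 - 1)
  field_simp
  linear_combination (q' * b * (q x ^ 2 - 1) - q' * (q x * p x - b)) * hsw2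

lemma cosh_arcosh {x : ℝ} (hx : 1 ≤ x) : Real.cosh (_root_.arcosh x) = x := by
  have h0 : (0:ℝ) ≤ x ^ 2 - 1 := by nlinarith
  have hs : Real.sqrt (x ^ 2 - 1) ^ 2 = x ^ 2 - 1 := Real.sq_sqrt h0
  have hy : 0 < x + Real.sqrt (x ^ 2 - 1) := by
    have := Real.sqrt_nonneg (x ^ 2 - 1); linarith
  rw [_root_.arcosh, Real.cosh_eq, Real.exp_log hy, Real.exp_neg, Real.exp_log hy]
  rw [inv_eq_one_div]
  field_simp
  nlinarith [hs]

lemma sinh_arcosh {x : ℝ} (hx : 1 ≤ x) : Real.sinh (_root_.arcosh x) = Real.sqrt (x ^ 2 - 1) := by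
  have h0 : (0:ℝ) ≤ x ^ 2 - 1 := by nlinarith
  have hs : Real.sqrt (x ^ 2 - 1) ^ 2 = x ^ 2 - 1 := Real.sq_sqrt h0
  have hy : 0 < x + Real.sqrt (x ^ 2 - 1) := by
    have := Real.sqrt_nonneg (x ^ 2 - 1); linarith
  rw [_root_.arcosh, Real.sinh_eq, Real.exp_log hy, Real.exp_neg, Real.exp_log hy]
  rw [inv_eq_one_div]
  field_simp
  nlinarith [hs]

lemma arcosh_pos {x : ℝ} (hx : 1 < x) : 0 < _root_.arcosh x := by
  have h0 : (0:ℝ) ≤ x ^ 2 - 1 := by nlinarith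
  apply Real.log_pos
  have := Real.sqrt_nonneg (x ^ 2 - 1); linarith

noncomputable def gH (Φ r : Fin 3 → ℝ) (i : Fin 3) : ℝ :=
  Real.cosh (r (i + 1)) * Real.cosh (r (i + 2)) +
    Real.sinh (r (i + 1)) * Real.sinh (r (i + 2)) * Real.cos (Φ i)

lemma ellH_eq (Φ r : Fin 3 → ℝ) (i : Fin 3) : ellH Φ r i = _root_.arcosh (gH Φ r i) := rfl

lemma one_lt_gH {Φ r : Fin 3 → ℝ} {i : Fin 3} (h1 : 0 < r (i + 1)) (h2 : 0 < r (i + 2))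
    (h3 : -1 < Real.cos (Φ i)) : 1 < gH Φ r i := by
  have hc := Real.cosh_sub (r (i + 1)) (r (i + 2))
  have h1c := Real.one_le_cosh (r (i + 1) - r (i + 2))
  have hs1 := Real.sinh_pos_iff.2 h1
  have hs2 := Real.sinh_pos_iff.2 h2
  have := mul_pos (mul_pos hs1 hs2) (by linarith : 0 < 1 + Real.cos (Φ i))
  unfold gH
  nlinarith

lemma neg_one_lt_cos {x : ℝ} (hx : x ∈ Set.Ico 0 π) : -1 < Real.cos x := by
  have := Real.strictAntiOn_cos ⟨hx.1, hx.2.le⟩ ⟨le_refl 0 |>.trans Real.pi_pos.le |>.trans (le_refl π), le_refl π⟩ hx.2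
  simpa [Real.cos_pi] using this

lemma cosh_ellH {Φ r : Fin 3 → ℝ} {i : Fin 3} (h : 1 < gH Φ r i) :
    Real.cosh (ellH Φ r i) = gH Φ r i := by rw [ellH_eq]; exact _root_.cosh_arcosh h.le

lemma sinh_ellH {Φ r : Fin 3 → ℝ} {i : Fin 3} (h : 1 < gH Φ r i) :
    Real.sinh (ellH Φ r i) = Real.sqrt ((gH Φ r i) ^ 2 - 1) := by
  rw [ellH_eq]; exact _root_.sinh_arcosh h.le

lemma thetaH_eq {Φ r : Fin 3 → ℝ} (h : ∀ k, 1 < gH Φ r k) (i : Fin 3) :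
    thetaH Φ r i = Real.arccos ((gH Φ r (i + 1) * gH Φ r (i + 2) - gH Φ r i) /
      (Real.sqrt ((gH Φ r (i + 1)) ^ 2 - 1) * Real.sqrt ((gH Φ r (i + 2)) ^ 2 - 1))) := by
  rw [thetaH, cosh_ellH (h (i + 1)), cosh_ellH (h (i + 2)), cosh_ellH (h i),
    sinh_ellH (h (i + 1)), sinh_ellH (h (i + 2))]

lemma A2_pos {l1 l2 l3 : ℝ} (h1 : 0 < l1) (h2 : 0 < l2) (h3 : 0 < l3)
    (t1 : l1 < l2 + l3) (t2 : l2 < l3 + l1) (t3 : l3 < l1 + l2) :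
    0 < ((Real.cosh l2) ^ 2 - 1) * ((Real.cosh l3) ^ 2 - 1) -
      (Real.cosh l2 * Real.cosh l3 - Real.cosh l1) ^ 2 := by
  have ha : Real.cosh l1 < Real.cosh l2 * Real.cosh l3 + Real.sinh l2 * Real.sinh l3 := by
    rw [← Real.cosh_add]
    exact Real.cosh_lt_cosh.2 (by rw [abs_of_pos h1, abs_of_pos (by linarith : (0:ℝ) < l2 + l3)]; exact t1)
  have hb : Real.cosh l2 * Real.cosh l3 - Real.sinh l2 * Real.sinh l3 < Real.cosh l1 := by
    rw [← Real.cosh_sub]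
    exact Real.cosh_lt_cosh.2 (by rw [abs_of_pos h1, abs_lt]; constructor <;> linarith)
  have hs2 := Real.cosh_sq_sub_sinh_sq l2
  have hs3 := Real.cosh_sq_sub_sinh_sq l3
  nlinarith [mul_pos (by linarith : (0:ℝ) < Real.cosh l1 - (Real.cosh l2 * Real.cosh l3 - Real.sinh l2 * Real.sinh l3))
    (by linarith : (0:ℝ) < Real.cosh l2 * Real.cosh l3 + Real.sinh l2 * Real.sinh l3 - Real.cosh l1)]

lemma fin3_e11 (i : Fin 3) : i + 1 + 1 = i + 2 := by rw [add_assoc]; rfl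
lemma fin3_e12 (i : Fin 3) : i + 1 + 2 = i := by rw [add_assoc]; simp [show (1+2 : Fin 3) = 0 from rfl]
lemma fin3_e21 (i : Fin 3) : i + 2 + 1 = i := by rw [add_assoc]; simp [show (2+1 : Fin 3) = 0 from rfl]
lemma fin3_e22 (i : Fin 3) : i + 2 + 2 = i + 1 := by rw [add_assoc]; rfl
lemma fin3_ne1 (i : Fin 3) : i + 1 ≠ i := by simp [Fin.ext_iff, Fin.add_def]; omega
lemma fin3_ne2 (i : Fin 3) : i + 2 ≠ i := by simp [Fin.ext_iff, Fin.add_def]; omega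
lemma fin3_ne12 (i : Fin 3) : i + 2 ≠ i + 1 := by simp [Fin.ext_iff, Fin.add_def]; omega

end Aux

lemma main_half (Φ r : Fin 3 → ℝ)
    (hΦ : ∀ i, Φ i ∈ Set.Ico 0 π)
    (hr : ∀ i, 0 < r i)
    (htri : ∀ i, ellH Φ r i < ellH Φ r (i + 1) + ellH Φ r (i + 2)) (i : Fin 3) :
    Real.sinh (r (i+1)) * deriv (fun x => thetaH Φ (Function.update r (i+1) x) i) (r (i+1)) =
    Real.sinh (r i) * deriv (fun x => thetaH Φ (Function.update r i x) (i+1)) (r i) := by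
  have hcos : ∀ k, -1 < Real.cos (Φ k) := fun k => neg_one_lt_cos (hΦ k)
  have hg : ∀ k, 1 < gH Φ r k := fun k => one_lt_gH (hr _) (hr _) (hcos k)
  have hg1raw : gH Φ r i = (Real.cosh (r (i+1)) * Real.cosh (r (i+2)) + Real.sinh (r (i+1)) * Real.sinh (r (i+2)) * Real.cos (Φ i)) := rfl
  have hg2raw : gH Φ r (i+1) = (Real.cosh (r (i+2)) * Real.cosh (r i) + Real.sinh (r (i+2)) * Real.sinh (r i) * Real.cos (Φ (i+1))) := by rw [gH, fin3_e11, fin3_e12]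
  have hg3raw : gH Φ r (i+2) = (Real.cosh (r i) * Real.cosh (r (i+1)) + Real.sinh (r i) * Real.sinh (r (i+1)) * Real.cos (Φ (i+2))) := by rw [gH, fin3_e21, fin3_e22]
  have hl : ∀ k, 0 < ellH Φ r k := fun k => by rw [ellH_eq]; exact _root_.arcosh_pos (hg k)
  have ht1 : ellH Φ r (i+1) < ellH Φ r (i+2) + ellH Φ r i := by
    have := htri (i+1); rwa [fin3_e11, fin3_e12] at this
  have ht2 : ellH Φ r (i+2) < ellH Φ r i + ellH Φ r (i+1) := by
    have := htri (i+2); rwa [fin3_e21, fin3_e22] at this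
  have hAL : 0 < (((Real.cosh (r (i+2)) * Real.cosh (r i) + Real.sinh (r (i+2)) * Real.sinh (r i) * Real.cos (Φ (i+1))) ^ 2 - 1) * ((Real.cosh (r i) * Real.cosh (r (i+1)) + Real.sinh (r i) * Real.sinh (r (i+1)) * Real.cos (Φ (i+2))) ^ 2 - 1) - ((Real.cosh (r (i+2)) * Real.cosh (r i) + Real.sinh (r (i+2)) * Real.sinh (r i) * Real.cos (Φ (i+1))) * (Real.cosh (r i) * Real.cosh (r (i+1)) + Real.sinh (r i) * Real.sinh (r (i+1)) * Real.cos (Φ (i+2))) - (Real.cosh (r (i+1)) * Real.cosh (r (i+2)) + Real.sinh (r (i+1)) * Real.sinh (r (i+2)) * Real.cos (Φ i))) ^ 2) := by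
    have := A2_pos (hl i) (hl (i+1)) (hl (i+2)) (htri i) (by linarith) (by linarith)
    rwa [cosh_ellH (hg i), cosh_ellH (hg (i+1)), cosh_ellH (hg (i+2)),
      hg1raw, hg2raw, hg3raw] at this
  have hAR : 0 < (((Real.cosh (r (i+1)) * Real.cosh (r (i+2)) + Real.sinh (r (i+1)) * Real.sinh (r (i+2)) * Real.cos (Φ i)) ^ 2 - 1) * ((Real.cosh (r i) * Real.cosh (r (i+1)) + Real.sinh (r i) * Real.sinh (r (i+1)) * Real.cos (Φ (i+2))) ^ 2 - 1) - ((Real.cosh (r (i+1)) * Real.cosh (r (i+2)) + Real.sinh (r (i+1)) * Real.sinh (r (i+2)) * Real.cos (Φ i)) * (Real.cosh (r i) * Real.cosh (r (i+1)) + Real.sinh (r i) * Real.sinh (r (i+1)) * Real.cos (Φ (i+2))) - (Real.cosh (r (i+2)) * Real.cosh (r i) + Real.sinh (r (i+2)) * Real.sinh (r i) * Real.cos (Φ (i+1)))) ^ 2) := by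
    have := A2_pos (hl (i+1)) (hl i) (hl (i+2)) (by linarith) (by linarith [htri i]) (by linarith)
    rwa [cosh_ellH (hg i), cosh_ellH (hg (i+1)), cosh_ellH (hg (i+2)),
      hg1raw, hg2raw, hg3raw] at this
  have hbL : 1 < (Real.cosh (r (i+2)) * Real.cosh (r i) + Real.sinh (r (i+2)) * Real.sinh (r i) * Real.cos (Φ (i+1))) := hg2raw ▸ hg (i+1)
  have hbR : 1 < (Real.cosh (r (i+1)) * Real.cosh (r (i+2)) + Real.sinh (r (i+1)) * Real.sinh (r (i+2)) * Real.cos (Φ i)) := hg1raw ▸ hg i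
  have hG3 : 1 < (Real.cosh (r i) * Real.cosh (r (i+1)) + Real.sinh (r i) * Real.sinh (r (i+1)) * Real.cos (Φ (i+2))) := hg3raw ▸ hg (i+2)
  have hpL : HasDerivAt (fun x => Real.cosh x * Real.cosh (r (i+2)) + Real.sinh x * Real.sinh (r (i+2)) * Real.cos (Φ i))
      (Real.sinh (r (i+1)) * Real.cosh (r (i+2)) + Real.cosh (r (i+1)) * Real.sinh (r (i+2)) * Real.cos (Φ i)) (r (i+1)) :=
    ((Real.hasDerivAt_cosh _).mul_const _).add (((Real.hasDerivAt_sinh _).mul_const _).mul_const _)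
  have hqL : HasDerivAt (fun x => Real.cosh (r i) * Real.cosh x + Real.sinh (r i) * Real.sinh x * Real.cos (Φ (i+2)))
      (Real.cosh (r i) * Real.sinh (r (i+1)) + Real.sinh (r i) * Real.cosh (r (i+1)) * Real.cos (Φ (i+2))) (r (i+1)) :=
    ((Real.hasDerivAt_cosh _).const_mul _).add (((Real.hasDerivAt_sinh _).const_mul _).mul_const _)
  have hpR : HasDerivAt (fun x => Real.cosh (r (i+2)) * Real.cosh x + Real.sinh (r (i+2)) * Real.sinh x * Real.cos (Φ (i+1)))
      (Real.cosh (r (i+2)) * Real.sinh (r i) + Real.sinh (r (i+2)) * Real.cosh (r i) * Real.cos (Φ (i+1))) (r i) :=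
    ((Real.hasDerivAt_cosh _).const_mul _).add (((Real.hasDerivAt_sinh _).const_mul _).mul_const _)
  have hqR : HasDerivAt (fun x => Real.cosh x * Real.cosh (r (i+1)) + Real.sinh x * Real.sinh (r (i+1)) * Real.cos (Φ (i+2)))
      (Real.sinh (r i) * Real.cosh (r (i+1)) + Real.cosh (r i) * Real.sinh (r (i+1)) * Real.cos (Φ (i+2))) (r i) :=
    ((Real.hasDerivAt_cosh _).mul_const _).add (((Real.hasDerivAt_sinh _).mul_const _).mul_const _)
  have hcoreL : HasDerivAt (fun x => Real.arccos (((Real.cosh (r (i+2)) * Real.cosh (r i) + Real.sinh (r (i+2)) * Real.sinh (r i) * Real.cos (Φ (i+1))) * (Real.cosh (r i) * Real.cosh x + Real.sinh (r i) * Real.sinh x * Real.cos (Φ (i+2))) - (Real.cosh x * Real.cosh (r (i+2)) + Real.sinh x * Real.sinh (r (i+2)) * Real.cos (Φ i))) / (Real.sqrt ((Real.cosh (r (i+2)) * Real.cosh (r i) + Real.sinh (r (i+2)) * Real.sinh (r i) * Real.cos (Φ (i+1))) ^ 2 - 1) * Real.sqrt ((Real.cosh (r i) * Real.cosh x + Real.sinh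 (r i) * Real.sinh x * Real.cos (Φ (i+2))) ^ 2 - 1)))) (((Real.sinh (r (i+1)) * Real.cosh (r (i+2)) + Real.cosh (r (i+1)) * Real.sinh (r (i+2)) * Real.cos (Φ i)) * ((Real.cosh (r i) * Real.cosh (r (i+1)) + Real.sinh (r i) * Real.sinh (r (i+1)) * Real.cos (Φ (i+2))) ^ 2 - 1) - (Real.cosh (r i) * Real.sinh (r (i+1)) + Real.sinh (r i) * Real.cosh (r (i+1)) * Real.cos (Φ (i+2))) * ((Real.cosh (r (i+1)) * Real.cosh (r (i+2)) + Real.sinh (r (i+1)) * Real.sinh (r (i+2)) * Real.cos (Φ i)) * (Real.cosh (r i) * Real.cosh (r (i+1)) + Real.sinh (r i) * Real.sinh (r (i+1)) * Real.cos (Φ (i+2))) - (Real.cosh (r (i+2)) * Real.cosh (r i) + Real.sinh (r (i+2)) * Real.sinh (r i) * Real.cos (Φ (i+1))))) / (Real.sqrt (((Real.cosh (r (i+2)) * Real.cosh (r i) + Real.sinh (r (i+2)) * Real.sinh (r i) * Real.cos (Φ (i+1))) ^ 2 - 1) * ((Real.cosh (r i) * Real.cosh (r (i+1)) + Real.sinh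 (r i) * Real.sinh (r (i+1)) * Real.cos (Φ (i+2))) ^ 2 - 1) - ((Real.cosh (r (i+2)) * Real.cosh (r i) + Real.sinh (r (i+2)) * Real.sinh (r i) * Real.cos (Φ (i+1))) * (Real.cosh (r i) * Real.cosh (r (i+1)) + Real.sinh (r i) * Real.sinh (r (i+1)) * Real.cos (Φ (i+2))) - (Real.cosh (r (i+1)) * Real.cosh (r (i+2)) + Real.sinh (r (i+1)) * Real.sinh (r (i+2)) * Real.cos (Φ i))) ^ 2) * ((Real.cosh (r i) * Real.cosh (r (i+1)) + Real.sinh (r i) * Real.sinh (r (i+1)) * Real.cos (Φ (i+2))) ^ 2 - 1))) (r (i+1)) := core hpL hqL hbL hG3 hAL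
  have hcoreR : HasDerivAt (fun x => Real.arccos (((Real.cosh (r (i+1)) * Real.cosh (r (i+2)) + Real.sinh (r (i+1)) * Real.sinh (r (i+2)) * Real.cos (Φ i)) * (Real.cosh x * Real.cosh (r (i+1)) + Real.sinh x * Real.sinh (r (i+1)) * Real.cos (Φ (i+2))) - (Real.cosh (r (i+2)) * Real.cosh x + Real.sinh (r (i+2)) * Real.sinh x * Real.cos (Φ (i+1)))) / (Real.sqrt ((Real.cosh (r (i+1)) * Real.cosh (r (i+2)) + Real.sinh (r (i+1)) * Real.sinh (r (i+2)) * Real.cos (Φ i)) ^ 2 - 1) * Real.sqrt ((Real.cosh x * Real.cosh (r (i+1)) + Real.sinh x * Real.sinh (r (i+1)) * Real.cos (Φ (i+2))) ^ 2 - 1)))) (((Real.cosh (r (i+2)) * Real.sinh (r i) + Real.sinh (r (i+2)) * Real.cosh (r i) * Real.cos (Φ (i+1))) * ((Real.cosh (r i) * Real.cosh (r (i+1)) + Real.sinh (r i) * Real.sinh (r (i+1)) * Real.cos (Φ (i+2))) ^ 2 - 1) - (Real.sinh (r i) * Real.cosh (r (i+1)) + Real.cosh (r i) * Real.sinh (r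 (i+1)) * Real.cos (Φ (i+2))) * ((Real.cosh (r (i+2)) * Real.cosh (r i) + Real.sinh (r (i+2)) * Real.sinh (r i) * Real.cos (Φ (i+1))) * (Real.cosh (r i) * Real.cosh (r (i+1)) + Real.sinh (r i) * Real.sinh (r (i+1)) * Real.cos (Φ (i+2))) - (Real.cosh (r (i+1)) * Real.cosh (r (i+2)) + Real.sinh (r (i+1)) * Real.sinh (r (i+2)) * Real.cos (Φ i)))) / (Real.sqrt (((Real.cosh (r (i+1)) * Real.cosh (r (i+2)) + Real.sinh (r (i+1)) * Real.sinh (r (i+2)) * Real.cos (Φ i)) ^ 2 - 1) * ((Real.cosh (r i) * Real.cosh (r (i+1)) + Real.sinh (r i) * Real.sinh (r (i+1)) * Real.cos (Φ (i+2))) ^ 2 - 1) - ((Real.cosh (r (i+1)) * Real.cosh (r (i+2)) + Real.sinh (r (i+1)) * Real.sinh (r (i+2)) * Real.cos (Φ i)) * (Real.cosh (r i) * Real.cosh (r (i+1)) + Real.sinh (r i) * Real.sinh (r (i+1)) * Real.cos (Φ (i+2))) - (Real.cosh (r (i+2)) * Real.cosh (r i) + Real.sinh (r (i+2)) * Real.sinh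 (r i) * Real.cos (Φ (i+1)))) ^ 2) * ((Real.cosh (r i) * Real.cosh (r (i+1)) + Real.sinh (r i) * Real.sinh (r (i+1)) * Real.cos (Φ (i+2))) ^ 2 - 1))) (r i) := core hpR hqR hbR hG3 hAR
  have hevL : (fun x => thetaH Φ (Function.update r (i+1) x) i) =ᶠ[nhds (r (i+1))] (fun x => Real.arccos (((Real.cosh (r (i+2)) * Real.cosh (r i) + Real.sinh (r (i+2)) * Real.sinh (r i) * Real.cos (Φ (i+1))) * (Real.cosh (r i) * Real.cosh x + Real.sinh (r i) * Real.sinh x * Real.cos (Φ (i+2))) - (Real.cosh x * Real.cosh (r (i+2)) + Real.sinh x * Real.sinh (r (i+2)) * Real.cos (Φ i))) / (Real.sqrt ((Real.cosh (r (i+2)) * Real.cosh (r i) + Real.sinh (r (i+2)) * Real.sinh (r i) * Real.cos (Φ (i+1))) ^ 2 - 1) * Real.sqrt ((Real.cosh (r i) * Real.cosh x + Real.sinh (r i) * Real.sinh x * Real.cos (Φ (i+2))) ^ 2 - 1)))) := by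
    filter_upwards [eventually_gt_nhds (hr (i+1))] with x hx
    have hupos : ∀ m, 0 < Function.update r (i+1) x m := by
      intro m
      rcases eq_or_ne m (i+1) with h | h
      · subst h; rw [Function.update_self]; exact hx
      · rw [Function.update_of_ne h]; exact hr m
    have hgu : ∀ k, 1 < gH Φ (Function.update r (i+1) x) k :=
      fun k => one_lt_gH (hupos _) (hupos _) (hcos k)
    rw [thetaH_eq hgu i]
    rw [show gH Φ (Function.update r (i+1) x) i = (Real.cosh x * Real.cosh (r (i+2)) + Real.sinh x * Real.sinh (r (i+2)) * Real.cos (Φ i)) from by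
        rw [gH, Function.update_self, Function.update_of_ne (fin3_ne12 i)],
      show gH Φ (Function.update r (i+1) x) (i+1) = (Real.cosh (r (i+2)) * Real.cosh (r i) + Real.sinh (r (i+2)) * Real.sinh (r i) * Real.cos (Φ (i+1))) from by
        rw [gH, fin3_e11, fin3_e12, Function.update_of_ne (fin3_ne12 i),
          Function.update_of_ne (Ne.symm (fin3_ne1 i))],
      show gH Φ (Function.update r (i+1) x) (i+2) = (Real.cosh (r i) * Real.cosh x + Real.sinh (r i) * Real.sinh x * Real.cos (Φ (i+2))) from by
        rw [gH, fin3_e21, fin3_e22, Function.update_of_ne (Ne.symm (fin3_ne1 i)),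
          Function.update_self]]
  have hevR : (fun x => thetaH Φ (Function.update r i x) (i+1)) =ᶠ[nhds (r i)] (fun x => Real.arccos (((Real.cosh (r (i+1)) * Real.cosh (r (i+2)) + Real.sinh (r (i+1)) * Real.sinh (r (i+2)) * Real.cos (Φ i)) * (Real.cosh x * Real.cosh (r (i+1)) + Real.sinh x * Real.sinh (r (i+1)) * Real.cos (Φ (i+2))) - (Real.cosh (r (i+2)) * Real.cosh x + Real.sinh (r (i+2)) * Real.sinh x * Real.cos (Φ (i+1)))) / (Real.sqrt ((Real.cosh (r (i+1)) * Real.cosh (r (i+2)) + Real.sinh (r (i+1)) * Real.sinh (r (i+2)) * Real.cos (Φ i)) ^ 2 - 1) * Real.sqrt ((Real.cosh x * Real.cosh (r (i+1)) + Real.sinh x * Real.sinh (r (i+1)) * Real.cos (Φ (i+2))) ^ 2 - 1)))) := by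
    filter_upwards [eventually_gt_nhds (hr i)] with x hx
    have hupos : ∀ m, 0 < Function.update r i x m := by
      intro m
      rcases eq_or_ne m i with h | h
      · subst h; rw [Function.update_self]; exact hx
      · rw [Function.update_of_ne h]; exact hr m
    have hgu : ∀ k, 1 < gH Φ (Function.update r i x) k :=
      fun k => one_lt_gH (hupos _) (hupos _) (hcos k)
    rw [thetaH_eq hgu (i+1), fin3_e11, fin3_e12]
    rw [show gH Φ (Function.update r i x) i = (Real.cosh (r (i+1)) * Real.cosh (r (i+2)) + Real.sinh (r (i+1)) * Real.sinh (r (i+2)) * Real.cos (Φ i)) from by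
        rw [gH, Function.update_of_ne (fin3_ne1 i), Function.update_of_ne (fin3_ne2 i)],
      show gH Φ (Function.update r i x) (i+1) = (Real.cosh (r (i+2)) * Real.cosh x + Real.sinh (r (i+2)) * Real.sinh x * Real.cos (Φ (i+1))) from by
        rw [gH, fin3_e11, fin3_e12, Function.update_of_ne (fin3_ne2 i), Function.update_self],
      show gH Φ (Function.update r i x) (i+2) = (Real.cosh x * Real.cosh (r (i+1)) + Real.sinh x * Real.sinh (r (i+1)) * Real.cos (Φ (i+2))) from by
        rw [gH, fin3_e21, fin3_e22, Function.update_self, Function.update_of_ne (fin3_ne1 i)]]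
    congr 1
    ring
  have hdL := (hcoreL.congr_of_eventuallyEq hevL).deriv
  have hdR := (hcoreR.congr_of_eventuallyEq hevR).deriv
  rw [hdL, hdR]
  rw [show Real.sqrt (((Real.cosh (r (i+1)) * Real.cosh (r (i+2)) + Real.sinh (r (i+1)) * Real.sinh (r (i+2)) * Real.cos (Φ i)) ^ 2 - 1) * ((Real.cosh (r i) * Real.cosh (r (i+1)) + Real.sinh (r i) * Real.sinh (r (i+1)) * Real.cos (Φ (i+2))) ^ 2 - 1) - ((Real.cosh (r (i+1)) * Real.cosh (r (i+2)) + Real.sinh (r (i+1)) * Real.sinh (r (i+2)) * Real.cos (Φ i)) * (Real.cosh (r i) * Real.cosh (r (i+1)) + Real.sinh (r i) * Real.sinh (r (i+1)) * Real.cos (Φ (i+2))) - (Real.cosh (r (i+2)) * Real.cosh (r i) + Real.sinh (r (i+2)) * Real.sinh (r i) * Real.cos (Φ (i+1)))) ^ 2) = Real.sqrt (((Real.cosh (r (i+2)) * Real.cosh (r i) + Real.sinh (r (i+2)) * Real.sinh (r i) * Real.cos (Φ (i+1))) ^ 2 - 1) * ((Real.cosh (r i) * Real.cosh (r (i+1))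 + Real.sinh (r i) * Real.sinh (r (i+1)) * Real.cos (Φ (i+2))) ^ 2 - 1) - ((Real.cosh (r (i+2)) * Real.cosh (r i) + Real.sinh (r (i+2)) * Real.sinh (r i) * Real.cos (Φ (i+1))) * (Real.cosh (r i) * Real.cosh (r (i+1)) + Real.sinh (r i) * Real.sinh (r (i+1)) * Real.cos (Φ (i+2))) - (Real.cosh (r (i+1)) * Real.cosh (r (i+2)) + Real.sinh (r (i+1)) * Real.sinh (r (i+2)) * Real.cos (Φ i))) ^ 2) from by rw [show (((Real.cosh (r (i+1)) * Real.cosh (r (i+2)) + Real.sinh (r (i+1)) * Real.sinh (r (i+2)) * Real.cos (Φ i)) ^ 2 - 1) * ((Real.cosh (r i) * Real.cosh (r (i+1)) + Real.sinh (r i) * Real.sinh (r (i+1)) * Real.cos (Φ (i+2))) ^ 2 - 1) - ((Real.cosh (r (i+1)) * Real.cosh (r (i+2)) + Real.sinh (r (i+1)) * Real.sinh (r (i+2)) * Real.cos (Φ i)) * (Real.cosh (r i) * Real.cosh (r (i+1)) + Real.sinh (r i) * Real.sinh (r (i+1)) * Real.cos (Φ (i+2))) - (Real.cosh (r (i+2))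 * Real.cosh (r i) + Real.sinh (r (i+2)) * Real.sinh (r i) * Real.cos (Φ (i+1)))) ^ 2) = (((Real.cosh (r (i+2)) * Real.cosh (r i) + Real.sinh (r (i+2)) * Real.sinh (r i) * Real.cos (Φ (i+1))) ^ 2 - 1) * ((Real.cosh (r i) * Real.cosh (r (i+1)) + Real.sinh (r i) * Real.sinh (r (i+1)) * Real.cos (Φ (i+2))) ^ 2 - 1) - ((Real.cosh (r (i+2)) * Real.cosh (r i) + Real.sinh (r (i+2)) * Real.sinh (r i) * Real.cos (Φ (i+1))) * (Real.cosh (r i) * Real.cosh (r (i+1)) + Real.sinh (r i) * Real.sinh (r (i+1)) * Real.cos (Φ (i+2))) - (Real.cosh (r (i+1)) * Real.cosh (r (i+2)) + Real.sinh (r (i+1)) * Real.sinh (r (i+2)) * Real.cos (Φ i))) ^ 2) from by ring]]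
  rw [← mul_div_assoc, ← mul_div_assoc]
  congr 1
  linear_combination (Real.sinh (r (i+1))^2*Real.cosh (r (i+2)) - Real.cosh (r (i+1))*Real.sinh (r (i+1))^3*Real.sinh (r (i+2))*Real.cos (Φ i) + Real.cosh (r (i+1))^3*Real.sinh (r (i+1))*Real.sinh (r (i+2))*Real.cos (Φ i) + Real.sinh (r i)^2*Real.sinh (r (i+1))^2*Real.cosh (r (i+2))*Real.cos (Φ (i+2))^2 - Real.sinh (r i)^2*Real.cosh (r (i+1))*Real.sinh (r (i+1))*Real.sinh (r (i+2))*Real.cos (Φ (i+1))*Real.cos (Φ (i+2)) + Real.cosh (r i)*Real.sinh (r i)*Real.cosh (r (i+1))*Real.sinh (r (i+1))*Real.cosh (r (i+2))*Real.cos (Φ (i+2)) - Real.cosh (r i)*Real.sinh (r i)*Real.cosh (r (i+1))^2*Real.sinh (r (i+2))*Real.cos (Φ (i+1))) * Real.cosh_sq_sub_sinh_sq (r i) + (Real.cosh (r (i+1))*Real.sinh (r (i+1))*Real.sinh (r (i+2))*Real.cos (Φ i) - Real.sinh (r i)^2*Real.cosh (r (i+2)) - Real.sinh (r i)^2*Real.sinh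 (r (i+1))^2*Real.cosh (r (i+2))*Real.cos (Φ (i+2))^2 + Real.sinh (r i)^2*Real.cosh (r (i+1))*Real.sinh (r (i+1))*Real.sinh (r (i+2))*Real.cos (Φ i) - Real.cosh (r i)*Real.sinh (r i)*Real.sinh (r (i+2))*Real.cos (Φ (i+1)) + Real.cosh (r i)*Real.sinh (r i)*Real.sinh (r (i+1))^2*Real.sinh (r (i+2))*Real.cos (Φ i)*Real.cos (Φ (i+2)) - Real.cosh (r i)*Real.sinh (r i)*Real.cosh (r (i+1))*Real.sinh (r (i+1))*Real.cosh (r (i+2))*Real.cos (Φ (i+2))) * Real.cosh_sq_sub_sinh_sq (r (i+1))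

/-- Lemma 2.3 in the hyperbolic background geometry:
`sinh (r j) · ∂θ i / ∂r j = sinh (r i) · ∂θ j / ∂r i` for all pairs of distinct
indices `i, j`. -/
theorem hyperbolic_deriv_symm
    (Φ r : Fin 3 → ℝ)
    (hΦ : ∀ i, Φ i ∈ Set.Ico 0 π)
    (hr : ∀ i, 0 < r i)
    (htri : ∀ i, ellH Φ r i < ellH Φ r (i + 1) + ellH Φ r (i + 2)) :
    ∀ i j : Fin 3, i ≠ j →
      Real.sinh (r j) * deriv (fun x => thetaH Φ (Function.update r j x) i) (r j) =
      Real.sinh (r i) * deriv (fun x => thetaH Φ (Function.update r i x) j) (r i) := by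
  intro i j hij
  have hcases : ∀ i j : Fin 3, i ≠ j → (j = i + 1 ∨ i = j + 1) := by decide
  rcases hcases i j hij with h | h
  · subst h; exact main_half Φ r hΦ hr htri i
  · subst h; exact (main_half Φ r hΦ hr htri j).symm
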